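/- Let U : ℝ^d → ℝ be differentiable with gradient ξ = ∇U continuously differentiable, and let r > 0 and h > 0. For every z = (x,v) ∈ ℝ^d × ℝ^d with |z| ≤ r, the Weave transform φ_h = Φ_circle ∘ Φ_bounce ∘ Φ_circle (circle transforms with angle h) satisfies |U(p_X(φ_h(z))) − U(x)| ≤ h²·C(r), where p_X(x,v) = x and C(r) = r·sup_{|y|≤r}|ξ(y)| + r²·sup_{|y|≤r}|∂ξ(y)|, with |∂ξ(y)| the operator norm of the Jacobian matrix of ξ at y. -/

import Mathlib

open MeasureTheory
open scoped ENNReal RealInnerProductSpace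

/-- The circle transform with angle `h` on `ℝ^d × ℝ^d`. -/
noncomputable def circleT (d : ℕ) (h : ℝ)
    (z : EuclideanSpace ℝ (Fin d) × EuclideanSpace ℝ (Fin d)) :
    EuclideanSpace ℝ (Fin d) × EuclideanSpace ℝ (Fin d) :=
  (Real.cos h • z.1 + Real.sin h • z.2, -(Real.sin h) • z.1 + Real.cos h • z.2)

/-- The normalized vector field `ξ̄(x) = ξ(x)/|ξ(x)|` (junk value `0` on `𝒩 = {ξ = 0}`). -/
noncomputable def xibar (d : ℕ) (ξ : EuclideanSpace ℝ (Fin d) → EuclideanSpace ℝ (Fin d))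
    (x : EuclideanSpace ℝ (Fin d)) : EuclideanSpace ℝ (Fin d) :=
  ‖ξ x‖⁻¹ • ξ x

open Classical in
/-- The reflection `R(x)v = v − 2(ξ̄(x)ᵀv)ξ̄(x)` for `x ∉ 𝒩`, and `R(x)v = −v` for `x ∈ 𝒩`. -/
noncomputable def reflT (d : ℕ) (ξ : EuclideanSpace ℝ (Fin d) → EuclideanSpace ℝ (Fin d))
    (x v : EuclideanSpace ℝ (Fin d)) : EuclideanSpace ℝ (Fin d) :=
  if ξ x = 0 then -v else v - (2 * ⟪xibar d ξ x, v⟫) • xibar d ξ x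

/-- The bounce transform `Φ_bounce(x,v) = (x, R(x)v)`. -/
noncomputable def bounceT (d : ℕ) (ξ : EuclideanSpace ℝ (Fin d) → EuclideanSpace ℝ (Fin d))
    (z : EuclideanSpace ℝ (Fin d) × EuclideanSpace ℝ (Fin d)) :
    EuclideanSpace ℝ (Fin d) × EuclideanSpace ℝ (Fin d) :=
  (z.1, reflT d ξ z.1 z.2)

section aux
variable {d : ℕ}
local notation "E" => EuclideanSpace ℝ (Fin d)

lemma expand_sq (a b : E) (s k : ℝ) :
    ‖s • a + k • b‖ ^ 2 = s ^ 2 * ‖a‖ ^ 2 + 2 * (s * k) * ⟪a, b⟫ + k ^ 2 * ‖b‖ ^ 2 := by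
  rw [norm_add_sq_real, norm_smul, norm_smul, real_inner_smul_left, real_inner_smul_right]
  simp only [Real.norm_eq_abs, mul_pow, sq_abs]
  ring

lemma refl_norm_sq (ξ : E → E) (x v : E) : ‖reflT d ξ x v‖ ^ 2 = ‖v‖ ^ 2 := by
  unfold reflT
  split
  · simp
  · next hx =>
    have hu : ‖xibar d ξ x‖ = 1 := by
      unfold xibar
      rw [norm_smul, norm_inv, norm_norm, inv_mul_cancel₀ (norm_ne_zero_iff.2 hx)]
    rw [norm_sub_sq_real, norm_smul, real_inner_smul_right, hu, real_inner_comm v]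
    simp only [Real.norm_eq_abs, mul_pow, sq_abs]
    ring

lemma refl_inner (ξ : E → E) (x v : E) : ⟪ξ x, reflT d ξ x v⟫ = -⟪ξ x, v⟫ := by
  unfold reflT
  split
  · next hx => simp [hx]
  · next hx =>
    have hn : ‖ξ x‖ ≠ 0 := norm_ne_zero_iff.2 hx
    unfold xibar
    rw [inner_sub_right, real_inner_smul_right, real_inner_smul_right, real_inner_smul_left,
      real_inner_self_eq_norm_sq]
    field_simp
    ring

lemma key_taylor (U : E → ℝ) (ξ : E → E) (hgrad : ∀ x, HasGradientAt U (ξ x) x)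
    (hξ : ContDiff ℝ 1 ξ) (r M₁ M₂ h : ℝ) (hr : 0 ≤ r) (hh : 0 ≤ h)
    (hM₁ : ∀ y : E, ‖y‖ ≤ r → ‖ξ y‖ ≤ M₁) (hM₂ : ∀ y : E, ‖y‖ ≤ r → ‖fderiv ℝ ξ y‖ ≤ M₂)
    (a b : E) (hab : ‖a‖ ^ 2 + ‖b‖ ^ 2 ≤ r ^ 2) :
    |U (Real.cos h • a + Real.sin h • b) - U a - h * ⟪ξ a, b⟫| ≤
      (r * M₁ + r ^ 2 * M₂) * h ^ 2 / 2 := by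
  have hM₁0 : 0 ≤ M₁ := le_trans (norm_nonneg _) (hM₁ 0 (by simpa using hr))
  have hM₂0 : 0 ≤ M₂ := le_trans (norm_nonneg _) (hM₂ 0 (by simpa using hr))
  set K : ℝ := r * M₁ + r ^ 2 * M₂ with hK
  have hK0 : 0 ≤ K := by positivity
  set c : ℝ → E := fun t => Real.cos t • a + Real.sin t • b with hc_def
  set c' : ℝ → E := fun t => -Real.sin t • a + Real.cos t • b with hc'_def
  have hc : ∀ t, HasDerivAt c (c' t) t := fun t =>
    ((Real.hasDerivAt_cos t).smul_const a).add ((Real.hasDerivAt_sin t).smul_const b)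
  have hc' : ∀ t, HasDerivAt c' (-(c t)) t := by
    intro t
    have h1 := (((Real.hasDerivAt_sin t).neg).smul_const a).add
      (((Real.hasDerivAt_cos t)).smul_const b)
    refine h1.congr_deriv ?_
    simp [hc_def, neg_add, neg_smul, add_comm]
  have hnorm : ∀ t, ‖c t‖ ^ 2 + ‖c' t‖ ^ 2 = ‖a‖ ^ 2 + ‖b‖ ^ 2 := by
    intro t
    rw [hc_def, hc'_def]
    simp only [expand_sq]
    linear_combination (‖a‖ ^ 2 + ‖b‖ ^ 2) * Real.sin_sq_add_cos_sq t
  have hcr : ∀ t, ‖c t‖ ≤ r := by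
    intro t
    nlinarith [hnorm t, norm_nonneg (c t), norm_nonneg (c' t), sq_nonneg (‖c' t‖)]
  have hc'r : ∀ t, ‖c' t‖ ≤ r := by
    intro t
    nlinarith [hnorm t, norm_nonneg (c t), norm_nonneg (c' t)]
  set F : ℝ → ℝ := fun t => U (c t) with hF_def
  set F' : ℝ → ℝ := fun t => ⟪ξ (c t), c' t⟫ with hF'_def
  have hF : ∀ t, HasDerivAt F (F' t) t := by
    intro t
    have h1 := ((hgrad (c t)).hasFDerivAt).comp_hasDerivAt t (hc t)
    simpa [hF_def, hF'_def, InnerProductSpace.toDual_apply_apply, Function.comp_def] using h1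
  have hξd : ∀ y : E, HasFDerivAt ξ (fderiv ℝ ξ y) y := fun y =>
    (hξ.differentiable one_ne_zero y).hasFDerivAt
  have hF' : ∀ t, HasDerivAt F'
      (⟪ξ (c t), -(c t)⟫ + ⟪(fderiv ℝ ξ (c t)) (c' t), c' t⟫) t := by
    intro t
    exact HasDerivAt.inner ℝ ((hξd (c t)).comp_hasDerivAt t (hc t)) (hc' t)
  have hbnd : ∀ t, |⟪ξ (c t), -(c t)⟫ + ⟪(fderiv ℝ ξ (c t)) (c' t), c' t⟫| ≤ K := by
    intro t
    have h1 : |⟪ξ (c t), -(c t)⟫| ≤ M₁ * r := by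
      refine le_trans (abs_real_inner_le_norm _ _) ?_
      have := hM₁ (c t) (hcr t)
      have h2 : ‖-(c t)‖ ≤ r := by rw [norm_neg]; exact hcr t
      exact mul_le_mul this h2 (norm_nonneg _) hM₁0
    have h2 : |⟪(fderiv ℝ ξ (c t)) (c' t), c' t⟫| ≤ M₂ * r * r := by
      refine le_trans (abs_real_inner_le_norm _ _) ?_
      have h3 : ‖(fderiv ℝ ξ (c t)) (c' t)‖ ≤ M₂ * r := by
        refine le_trans (ContinuousLinearMap.le_opNorm _ _) ?_
        exact mul_le_mul (hM₂ (c t) (hcr t)) (hc'r t) (norm_nonneg _) hM₂0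
      exact mul_le_mul h3 (hc'r t) (norm_nonneg _) (by positivity)
    calc |⟪ξ (c t), -(c t)⟫ + ⟪(fderiv ℝ ξ (c t)) (c' t), c' t⟫|
        ≤ |⟪ξ (c t), -(c t)⟫| + |⟪(fderiv ℝ ξ (c t)) (c' t), c' t⟫| := abs_add_le _ _
      _ ≤ M₁ * r + M₂ * r * r := add_le_add h1 h2
      _ = K := by rw [hK]; ring
  have hLip : ∀ t ∈ Set.Icc (0 : ℝ) h, |F' t - F' 0| ≤ K * t := by
    intro t ht
    have h1 := (convex_Icc (0 : ℝ) h).norm_image_sub_le_of_norm_hasDerivWithin_le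
      (f := F') (C := K)
      (fun s _ => (hF' s).hasDerivWithinAt) (fun s _ => hbnd s)
      (Set.left_mem_Icc.2 hh) ht
    simpa [Real.norm_eq_abs, abs_of_nonneg ht.1] using h1
  have hF'cont : Continuous F' :=
    continuous_iff_continuousAt.2 fun t => (hF' t).continuousAt
  have hint : ∫ t in (0:ℝ)..h, (F' t - F' 0) = (F h - F 0) - h * F' 0 := by
    have h1 := intervalIntegral.integral_eq_sub_of_hasDerivAt
      (f := fun t => F t - t * F' 0) (f' := fun t => F' t - F' 0) (a := 0) (b := h)
      (fun t _ => (hF t).sub ((hasDerivAt_mul_const (F' 0)).congr_deriv rfl))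
      ((hF'cont.sub continuous_const).intervalIntegrable 0 h)
    have h2 : ∫ t in (0:ℝ)..h, (F' t - F' 0) = F h - h * F' 0 - F 0 := by simpa using h1
    linarith
  have hIbound : |(F h - F 0) - h * F' 0| ≤ K * h ^ 2 / 2 := by
    rw [← hint, ← Real.norm_eq_abs]
    have h2 : ‖∫ t in (0:ℝ)..h, (F' t - F' 0)‖ ≤ |∫ t in (0:ℝ)..h, K * t| := by
      refine (intervalIntegral.norm_integral_le_of_norm_le hh ?_
        ((continuous_const.mul continuous_id).intervalIntegrable 0 h)).trans (le_abs_self _)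
      refine Filter.Eventually.of_forall ?_
      intro t ht
      simpa [Real.norm_eq_abs] using hLip t ⟨le_of_lt ht.1, ht.2⟩
    refine h2.trans ?_
    rw [intervalIntegral.integral_const_mul, integral_id]
    have hnn : (0:ℝ) ≤ K * ((h ^ 2 - 0 ^ 2) / 2) := by
      have := sq_nonneg h
      nlinarith
    rw [abs_of_nonneg hnn]
    exact le_of_eq (by ring)
  have hc0 : c 0 = a := by simp [hc_def]
  have hc'0 : c' 0 = b := by simp [hc'_def]
  have hF0 : F 0 = U a := by rw [hF_def]; simp [hc0]
  have hF'0 : F' 0 = ⟪ξ a, b⟫ := by rw [hF'_def]; simp [hc0, hc'0]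
  calc |U (Real.cos h • a + Real.sin h • b) - U a - h * ⟪ξ a, b⟫|
      = |(F h - F 0) - h * F' 0| := by rw [hF0, hF'0]
    _ ≤ K * h ^ 2 / 2 := hIbound
    _ = (r * M₁ + r ^ 2 * M₂) * h ^ 2 / 2 := by rw [hK]

end aux


/-- The Weave transform `φ_h = Φ_circle ∘ Φ_bounce ∘ Φ_circle` changes the potential
energy `U` at most by `h²·C(r)` on the ball `{|z| ≤ r}`, where
`C(r) = r·sup_{|y|≤r}|ξ(y)| + r²·sup_{|y|≤r}|∂ξ(y)|`. -/
theorem stmt_12 (d : ℕ) (U : EuclideanSpace ℝ (Fin d) → ℝ)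
    (ξ : EuclideanSpace ℝ (Fin d) → EuclideanSpace ℝ (Fin d))
    (hgrad : ∀ x, HasGradientAt U (ξ x) x) (hξ_C1 : ContDiff ℝ 1 ξ)
    (r h : ℝ) (hr : 0 < r) (hh : 0 < h) :
    ∀ z : EuclideanSpace ℝ (Fin d) × EuclideanSpace ℝ (Fin d),
      ‖z.1‖ ^ 2 + ‖z.2‖ ^ 2 ≤ r ^ 2 →
      |U ((circleT d h (bounceT d ξ (circleT d h z))).1) - U z.1| ≤
        h ^ 2 * (r * (⨆ y : Metric.closedBall (0 : EuclideanSpace ℝ (Fin d)) r, ‖ξ ↑y‖)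
          + r ^ 2 * (⨆ y : Metric.closedBall (0 : EuclideanSpace ℝ (Fin d)) r,
              ‖fderiv ℝ ξ ↑y‖)) := by
  intro z hz
  set M₁ := ⨆ y : Metric.closedBall (0 : EuclideanSpace ℝ (Fin d)) r, ‖ξ ↑y‖ with hM₁_def
  set M₂ := ⨆ y : Metric.closedBall (0 : EuclideanSpace ℝ (Fin d)) r, ‖fderiv ℝ ξ ↑y‖
    with hM₂_def
  have hM₁ : ∀ y : EuclideanSpace ℝ (Fin d), ‖y‖ ≤ r → ‖ξ y‖ ≤ M₁ := by
    intro y hy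
    have hbdd : BddAbove (Set.range fun y : Metric.closedBall (0 : EuclideanSpace ℝ (Fin d)) r =>
        ‖ξ (y : EuclideanSpace ℝ (Fin d))‖) := by
      have hb := ((isCompact_closedBall (0 : EuclideanSpace ℝ (Fin d)) r).image
        hξ_C1.continuous.norm).bddAbove
      rwa [Set.image_eq_range] at hb
    exact le_ciSup hbdd ⟨y, by simpa [Metric.mem_closedBall, dist_zero_right] using hy⟩
  have hM₂ : ∀ y : EuclideanSpace ℝ (Fin d), ‖y‖ ≤ r → ‖fderiv ℝ ξ y‖ ≤ M₂ := by
    intro y hy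
    have hbdd : BddAbove (Set.range fun y : Metric.closedBall (0 : EuclideanSpace ℝ (Fin d)) r =>
        ‖fderiv ℝ ξ (y : EuclideanSpace ℝ (Fin d))‖) := by
      have hb := ((isCompact_closedBall (0 : EuclideanSpace ℝ (Fin d)) r).image
        (hξ_C1.continuous_fderiv one_ne_zero).norm).bddAbove
      rwa [Set.image_eq_range] at hb
    exact le_ciSup hbdd ⟨y, by simpa [Metric.mem_closedBall, dist_zero_right] using hy⟩
  set x := z.1 with hx_def
  set v := z.2 with hv_def
  set x₁ := Real.cos h • x + Real.sin h • v with hx₁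
  set v₁ := -Real.sin h • x + Real.cos h • v with hv₁
  set w := reflT d ξ x₁ v₁ with hw
  have hfinal : (circleT d h (bounceT d ξ (circleT d h z))).1
      = Real.cos h • x₁ + Real.sin h • w := rfl
  have hsum : ‖x₁‖ ^ 2 + ‖v₁‖ ^ 2 ≤ r ^ 2 := by
    rw [hx₁, hv₁, expand_sq, expand_sq]
    nlinarith [Real.sin_sq_add_cos_sq h, hz]
  have hA : ‖x₁‖ ^ 2 + ‖w‖ ^ 2 ≤ r ^ 2 := by rw [hw, refl_norm_sq]; exact hsum
  have hB : ‖x₁‖ ^ 2 + ‖-v₁‖ ^ 2 ≤ r ^ 2 := by rw [norm_neg]; exact hsum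
  have keyA := key_taylor U ξ hgrad hξ_C1 r M₁ M₂ h hr.le hh.le hM₁ hM₂ x₁ w hA
  have keyB := key_taylor U ξ hgrad hξ_C1 r M₁ M₂ h hr.le hh.le hM₁ hM₂ x₁ (-v₁) hB
  have hxid : Real.cos h • x₁ + Real.sin h • (-v₁) = x := by
    rw [hx₁, hv₁]
    match_scalars
    · linarith [Real.sin_sq_add_cos_sq h]
    · ring
  have hinner : ⟪ξ x₁, w⟫ = ⟪ξ x₁, -v₁⟫ := by
    rw [hw, refl_inner, inner_neg_right]
  set A := U (Real.cos h • x₁ + Real.sin h • w) - U x₁ - h * ⟪ξ x₁, w⟫ with hA_def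
  set B := U (Real.cos h • x₁ + Real.sin h • (-v₁)) - U x₁ - h * ⟪ξ x₁, -v₁⟫ with hB_def
  have hsplit : U (Real.cos h • x₁ + Real.sin h • w) - U x = A - B := by
    rw [hA_def, hB_def, hxid, hinner]; ring
  rw [hfinal, hsplit]
  have htri : |A - B| ≤ |A| + |B| := by
    calc |A - B| = |A + -B| := by ring_nf
      _ ≤ |A| + |-B| := abs_add_le _ _
      _ = |A| + |B| := by rw [abs_neg]
  refine htri.trans ?_
  calc |A| + |B| ≤ (r * M₁ + r ^ 2 * M₂) * h ^ 2 / 2 + (r * M₁ + r ^ 2 * M₂) * h ^ 2 / 2 :=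
        add_le_add keyA keyB
    _ = h ^ 2 * (r * M₁ + r ^ 2 * M₂) := by ring
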